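/- Finite-frequency performance condition for LPV systems with matrix-valued IQC (Lemma 5). Let n, p, q be positive integers and let A, B, C, D be continuous matrix-valued functions on [0,∞) with values in ℝ^{n×n}, ℝ^{n×p}, ℝ^{q×n}, ℝ^{q×p}. Let x : [0,∞) → ℝⁿ be continuously differentiable with x(0) = 0, let u : [0,∞) → ℝ^p be continuous, assume ẋ(t) = A(t)x(t) + B(t)u(t) for all t ≥ 0, and define y(t) = C(t)x(t) + D(t)u(t). Let Ψ_f ∈ ℝ^{2×2} be symmetric (a finite-frequency weight matrix, e.g. the low-frequency weight [[−1,0],[0,ϖ_l²]] or the high-frequency weight [[1,0],[0,−ϖ_h²]]), let Q ∈ ℝ^{n×n} be symmetric positive semidefinite, let Π ∈ ℝ^{(q+p)×(q+p)} be symmetric, and let P : [0,∞) → ℝ^{n×n} be differentiable with P(t) symmetric for every t. Assume: (i) for every t ≥ 0, [A(t) B(t); I 0]^T (Θ ⊗ P(t) + Θ_d ⊗ P'(t) + Ψ_f ⊗ Q) [A(t) B(t); I 0] + [C(t) D(t); 0 I]^T Π [C(t) D(t); 0 I] ⪯ 0; (ii) writing Z(t) for the n×2 matrix whose columns are ẋ(t)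 and x(t), the function t ↦ Z(t) Ψ_f Z(t)^T is integrable on [0,∞) and the n×n matrix ∫₀^∞ Z(t) Ψ_f Z(t)^T dt is positive semidefinite; (iii) t ↦ [y(t); u(t)]^T Π [y(t); u(t)] is integrable on [0,∞); (iv) lim_{T→∞} x(T)^T P(T) x(T) exists and is nonnegative. Then ∫₀^∞ [y(t); u(t)]^T Π [y(t); u(t)] dt ≤ 0. -/

import Mathlib

open Matrix MeasureTheory
open scoped Matrix.Norms.L2Operator

/-- `Ψ ⊗ Q`: the Kronecker product of a `2×2` real matrix with an `n×n` real matrix,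
realized as a `2n × 2n` block matrix. -/
noncomputable def kron2R {n : ℕ} (Ψ : Matrix (Fin 2) (Fin 2) ℝ)
    (Q : Matrix (Fin n) (Fin n) ℝ) : Matrix (Fin n ⊕ Fin n) (Fin n ⊕ Fin n) ℝ :=
  Matrix.fromBlocks (Ψ 0 0 • Q) (Ψ 0 1 • Q) (Ψ 1 0 • Q) (Ψ 1 1 • Q)

/-- The quadratic form `z ↦ zᵀ H z` over the reals. -/
noncomputable def qfR {m : Type*} [Fintype m] (H : Matrix m m ℝ) (z : m → ℝ) : ℝ :=
  dotProduct z (H.mulVec z)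

/-- The `n×2` matrix `Z(t)` whose columns are `ẋ(t)` and `x(t)`. -/
noncomputable def Zmat {n : ℕ} (xd xv : Fin n → ℝ) : Matrix (Fin n) (Fin 2) ℝ :=
  Matrix.of fun i j => ![xd i, xv i] j

/- ### Auxiliary lemmas -/

lemma qfR_transform {m m' : Type*} [Fintype m] [Fintype m'] (M : Matrix m m' ℝ)
    (H : Matrix m m ℝ) (z : m' → ℝ) :
    qfR (Mᵀ * H * M) z = qfR H (M *ᵥ z) := by
  simp only [qfR, ← Matrix.mulVec_mulVec, Matrix.dotProduct_mulVec (v := z),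
    Matrix.vecMul_transpose]

lemma qfR_add {m : Type*} [Fintype m] (H₁ H₂ : Matrix m m ℝ) (z : m → ℝ) :
    qfR (H₁ + H₂) z = qfR H₁ z + qfR H₂ z := by
  simp [qfR, Matrix.add_mulVec, dotProduct_add]

lemma qf_kron {n : ℕ} (Ψ : Matrix (Fin 2) (Fin 2) ℝ) (Q : Matrix (Fin n) (Fin n) ℝ)
    (a b : Fin n → ℝ) :
    qfR (kron2R Ψ Q) (Sum.elim a b) =
      Ψ 0 0 * (a ⬝ᵥ Q *ᵥ a) + Ψ 0 1 * (a ⬝ᵥ Q *ᵥ b) +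
      Ψ 1 0 * (b ⬝ᵥ Q *ᵥ a) + Ψ 1 1 * (b ⬝ᵥ Q *ᵥ b) := by
  simp [qfR, kron2R, Matrix.fromBlocks_mulVec, sumElim_dotProduct_sumElim,
    Matrix.smul_mulVec, dotProduct_add, dotProduct_smul, smul_eq_mul]
  ring

lemma trace_form {n : ℕ} (Ψ : Matrix (Fin 2) (Fin 2) ℝ) (Q : Matrix (Fin n) (Fin n) ℝ)
    (a b : Fin n → ℝ) :
    Matrix.trace (Q * (Zmat a b * Ψ * (Zmat a b)ᵀ)) =
      Ψ 0 0 * (a ⬝ᵥ Q *ᵥ a) + Ψ 0 1 * (b ⬝ᵥ Q *ᵥ a) +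
      Ψ 1 0 * (a ⬝ᵥ Q *ᵥ b) + Ψ 1 1 * (b ⬝ᵥ Q *ᵥ b) := by
  have key : ∀ (c d : Fin n → ℝ), c ⬝ᵥ Q *ᵥ d = ∑ k, ∑ l, c k * (Q k l * d l) := by
    intro c d
    simp [dotProduct, Matrix.mulVec, Finset.mul_sum]
  simp only [key, Finset.mul_sum]
  simp only [Matrix.trace, Matrix.diag, Matrix.mul_apply, Zmat, Matrix.of_apply,
    Matrix.transpose_apply, Fin.sum_univ_two, Matrix.cons_val_zero, Matrix.cons_val_one,
    Matrix.head_cons, Finset.mul_sum, Finset.sum_mul]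
  rw [← Finset.sum_add_distrib, ← Finset.sum_add_distrib, ← Finset.sum_add_distrib]
  apply Finset.sum_congr rfl
  intro k _
  rw [← Finset.sum_add_distrib, ← Finset.sum_add_distrib, ← Finset.sum_add_distrib]
  apply Finset.sum_congr rfl
  intro l _
  ring

open scoped MatrixOrder in
lemma trace_mul_psd_nonneg {N : ℕ} {Q M : Matrix (Fin N) (Fin N) ℝ}
    (hQ : Q.PosSemidef) (hM : M.PosSemidef) : 0 ≤ (Q * M).trace := by
  have htr : ∀ (X : Matrix (Fin N) (Fin N) ℝ), X.PosSemidef → 0 ≤ X.trace := by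
    intro X hX
    exact hX.trace_nonneg
  have hS : (CFC.sqrt Q).PosSemidef := (CFC.sqrt_nonneg Q).posSemidef
  have hherm : (CFC.sqrt Q)ᴴ = CFC.sqrt Q := hS.isHermitian
  have h2 : (CFC.sqrt Q * M * CFC.sqrt Q).trace = (Q * M).trace := by
    rw [Matrix.trace_mul_comm, ← mul_assoc, CFC.sqrt_mul_sqrt_self Q hQ.nonneg]
  rw [← h2]
  refine htr _ ?_
  have := hM.conjTranspose_mul_mul_same (CFC.sqrt Q)
  rwa [hherm] at this

/-- entry evaluation as a continuous linear map (w.r.t. the L2 operator norm). -/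
noncomputable def entryCLM {k l : ℕ} (i : Fin k) (j : Fin l) :
    Matrix (Fin k) (Fin l) ℝ →L[ℝ] ℝ :=
  LinearMap.toContinuousLinearMap
    { toFun := fun M => M i j
      map_add' := fun _ _ => rfl
      map_smul' := fun _ _ => rfl }

lemma hasDerivAt_entry {k l : ℕ} {P : ℝ → Matrix (Fin k) (Fin l) ℝ}
    {P' : Matrix (Fin k) (Fin l) ℝ} {t : ℝ} (hP : HasDerivAt P P' t) (i : Fin k) (j : Fin l) :
    HasDerivAt (fun s => P s i j) (P' i j) t :=
  (entryCLM i j).hasFDerivAt.comp_hasDerivAt t hP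

lemma continuousOn_entry {k l : ℕ} {P : ℝ → Matrix (Fin k) (Fin l) ℝ} {s : Set ℝ}
    (hP : ContinuousOn P s) (i : Fin k) (j : Fin l) :
    ContinuousOn (fun t => P t i j) s :=
  (entryCLM i j).continuous.comp_continuousOn hP

lemma hasDerivAt_coord {k : ℕ} {x : ℝ → Fin k → ℝ} {x' : Fin k → ℝ} {t : ℝ}
    (hx : HasDerivAt x x' t) (i : Fin k) :
    HasDerivAt (fun s => x s i) (x' i) t :=
  (ContinuousLinearMap.proj (R := ℝ) (φ := fun _ : Fin k => ℝ) i).hasFDerivAt.comp_hasDerivAt t hx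

lemma hasDerivAt_qf {k : ℕ} {P P' : ℝ → Matrix (Fin k) (Fin k) ℝ} {x x' : ℝ → Fin k → ℝ}
    {t : ℝ} (hP : HasDerivAt P (P' t) t) (hx : HasDerivAt x (x' t) t) :
    HasDerivAt (fun s => qfR (P s) (x s))
      (x' t ⬝ᵥ (P t *ᵥ x t) + x t ⬝ᵥ (P' t *ᵥ x t) + x t ⬝ᵥ (P t *ᵥ x' t)) t := by
  have key : HasDerivAt (fun s => ∑ i, x s i * ∑ j, P s i j * x s j)
      (∑ i, (x' t i * ∑ j, P t i j * x t j +
        x t i * ∑ j, (P' t i j * x t j + P t i j * x' t j))) t := by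
    refine HasDerivAt.fun_sum fun i _ => ?_
    exact (hasDerivAt_coord hx i).mul
      (HasDerivAt.fun_sum fun j _ => (hasDerivAt_entry hP i j).mul (hasDerivAt_coord hx j))
  have h1 : (fun s => qfR (P s) (x s)) = fun s => ∑ i, x s i * ∑ j, P s i j * x s j := by
    funext s
    simp [qfR, dotProduct, Matrix.mulVec]
  rw [h1]
  convert key using 1
  simp only [dotProduct, Matrix.mulVec, mul_add, Finset.sum_add_distrib, Finset.mul_sum]
  ring

lemma continuousOn_qf {m : Type*} [Fintype m] (H : Matrix m m ℝ) {z : ℝ → m → ℝ} {s : Set ℝ}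
    (hz : ∀ i, ContinuousOn (fun t => z t i) s) :
    ContinuousOn (fun t => qfR H (z t)) s := by
  simp only [qfR, dotProduct, Matrix.mulVec]
  exact continuousOn_finset_sum _ fun i _ => (hz i).mul
    (continuousOn_finset_sum _ fun j _ => continuousOn_const.mul (hz j))

lemma continuousOn_qfP {k : ℕ} {P : ℝ → Matrix (Fin k) (Fin k) ℝ} {x : ℝ → Fin k → ℝ}
    {s : Set ℝ} (hP : ContinuousOn P s) (hx : ContinuousOn x s) :
    ContinuousOn (fun t => qfR (P t) (x t)) s := by
  simp only [qfR, dotProduct, Matrix.mulVec]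
  exact continuousOn_finset_sum _ fun i _ => (continuousOn_pi.1 hx i).mul
    (continuousOn_finset_sum _ fun j _ => (continuousOn_entry hP i j).mul (continuousOn_pi.1 hx j))

lemma continuousOn_mulVecF {k l : ℕ} {M : ℝ → Matrix (Fin k) (Fin l) ℝ} {v : ℝ → Fin l → ℝ}
    {s : Set ℝ} (hM : ContinuousOn M s) (hv : ContinuousOn v s) :
    ContinuousOn (fun t => M t *ᵥ v t) s := by
  rw [continuousOn_pi]
  intro i
  simp only [Matrix.mulVec, dotProduct]
  exact continuousOn_finset_sum _ fun j _ =>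
    (continuousOn_entry hM i j).mul (continuousOn_pi.1 hv j)

/-- `M ↦ (Q * M).trace` as a continuous linear map. -/
noncomputable def traceMulCLM {N : ℕ} (Q : Matrix (Fin N) (Fin N) ℝ) :
    Matrix (Fin N) (Fin N) ℝ →L[ℝ] ℝ :=
  LinearMap.toContinuousLinearMap
    { toFun := fun M => (Q * M).trace
      map_add' := by intros; simp [mul_add]
      map_smul' := by intros; simp [Matrix.mul_smul] }

@[simp] lemma traceMulCLM_apply {N : ℕ} (Q M : Matrix (Fin N) (Fin N) ℝ) :
    traceMulCLM Q M = (Q * M).trace := rfl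

/-- Finite-frequency performance condition for LPV systems with matrix-valued IQC
(Lemma 5). -/
theorem finite_frequency_performance_LPV_matrix_IQC
    {n p q : ℕ} (hn : 0 < n) (hp : 0 < p) (hq : 0 < q)
    (A : ℝ → Matrix (Fin n) (Fin n) ℝ) (B : ℝ → Matrix (Fin n) (Fin p) ℝ)
    (C : ℝ → Matrix (Fin q) (Fin n) ℝ) (D : ℝ → Matrix (Fin q) (Fin p) ℝ)
    (hA : ContinuousOn A (Set.Ici 0)) (hB : ContinuousOn B (Set.Ici 0))
    (hC : ContinuousOn C (Set.Ici 0)) (hD : ContinuousOn D (Set.Ici 0))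
    (x : ℝ → Fin n → ℝ) (x' : ℝ → Fin n → ℝ)
    (hx : ∀ t ∈ Set.Ici (0:ℝ), HasDerivAt x (x' t) t)
    (hx'c : ContinuousOn x' (Set.Ici 0))
    (hx0 : x 0 = 0)
    (u : ℝ → Fin p → ℝ) (hu : ContinuousOn u (Set.Ici 0))
    (hode : ∀ t ∈ Set.Ici (0:ℝ), x' t = (A t).mulVec (x t) + (B t).mulVec (u t))
    (y : ℝ → Fin q → ℝ)
    (hy : ∀ t ∈ Set.Ici (0:ℝ), y t = (C t).mulVec (x t) + (D t).mulVec (u t))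
    (Ψf : Matrix (Fin 2) (Fin 2) ℝ) (hΨf : Ψf.IsSymm)
    (Q : Matrix (Fin n) (Fin n) ℝ) (hQ : Q.PosSemidef)
    (Pi : Matrix (Fin q ⊕ Fin p) (Fin q ⊕ Fin p) ℝ) (hPi : Pi.IsSymm)
    (P P' : ℝ → Matrix (Fin n) (Fin n) ℝ)
    (hP : ∀ t ∈ Set.Ici (0:ℝ), HasDerivAt P (P' t) t)
    (hPsymm : ∀ t ∈ Set.Ici (0:ℝ), (P t).IsSymm)
    -- (i) the pointwise LMI
    (hLMI : ∀ t ∈ Set.Ici (0:ℝ),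
      Matrix.PosSemidef
        (-((Matrix.fromBlocks (A t) (B t) (1 : Matrix (Fin n) (Fin n) ℝ) 0)ᵀ *
              (kron2R !![0,1;1,0] (P t) + kron2R !![0,0;0,1] (P' t) + kron2R Ψf Q) *
              Matrix.fromBlocks (A t) (B t) (1 : Matrix (Fin n) (Fin n) ℝ) 0 +
            (Matrix.fromBlocks (C t) (D t) 0 (1 : Matrix (Fin p) (Fin p) ℝ))ᵀ * Pi *
              Matrix.fromBlocks (C t) (D t) 0 (1 : Matrix (Fin p) (Fin p) ℝ))))
    -- (ii) the matrix-valued IQC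
    (hIQCint : IntegrableOn
      (fun t => Zmat (x' t) (x t) * Ψf * (Zmat (x' t) (x t))ᵀ) (Set.Ioi 0))
    (hIQC : Matrix.PosSemidef
      (∫ t in Set.Ioi (0:ℝ), Zmat (x' t) (x t) * Ψf * (Zmat (x' t) (x t))ᵀ))
    -- (iii) integrability of the performance integrand
    (hPerfInt : IntegrableOn (fun t => qfR Pi (Sum.elim (y t) (u t))) (Set.Ioi 0))
    -- (iv) the storage function has a nonnegative limit
    (hlim : ∃ L : ℝ, 0 ≤ L ∧
      Filter.Tendsto (fun T => qfR (P T) (x T)) Filter.atTop (nhds L)) :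
    ∫ t in Set.Ioi (0:ℝ), qfR Pi (Sum.elim (y t) (u t)) ≤ 0 := by
  classical
  -- abbreviations
  set trQ : ℝ → ℝ := fun t => qfR (kron2R Ψf Q) (Sum.elim (x' t) (x t)) with htrQdef
  set g : ℝ → ℝ := fun t => qfR Pi (Sum.elim (y t) (u t)) with hgdef
  set V : ℝ → ℝ := fun t => qfR (P t) (x t) with hVdef
  set Vd : ℝ → ℝ :=
    fun t => x' t ⬝ᵥ (P t *ᵥ x t) + x t ⬝ᵥ (P' t *ᵥ x t) + x t ⬝ᵥ (P t *ᵥ x' t) with hVddef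
  -- Step A : the pointwise dissipation inequality
  have stepA : ∀ t ∈ Set.Ici (0:ℝ), Vd t + trQ t + g t ≤ 0 := by
    intro t ht
    have hz := (hLMI t ht).dotProduct_mulVec_nonneg (Sum.elim (x t) (u t))
    set K := (Matrix.fromBlocks (A t) (B t) (1 : Matrix (Fin n) (Fin n) ℝ) 0)ᵀ *
        (kron2R !![0,1;1,0] (P t) + kron2R !![0,0;0,1] (P' t) + kron2R Ψf Q) *
        Matrix.fromBlocks (A t) (B t) (1 : Matrix (Fin n) (Fin n) ℝ) 0 +
      (Matrix.fromBlocks (C t) (D t) 0 (1 : Matrix (Fin p) (Fin p) ℝ))ᵀ * Pi *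
        Matrix.fromBlocks (C t) (D t) 0 (1 : Matrix (Fin p) (Fin p) ℝ) with hKdef
    have h0 : qfR K (Sum.elim (x t) (u t)) ≤ 0 := by
      rw [← neg_nonneg]
      simpa [qfR, Matrix.neg_mulVec, dotProduct_neg] using hz
    have hF1 : Matrix.fromBlocks (A t) (B t) 1 0 *ᵥ Sum.elim (x t) (u t)
        = Sum.elim (x' t) (x t) := by
      rw [Matrix.fromBlocks_mulVec]
      simp [Sum.elim_comp_inl, Sum.elim_comp_inr, Matrix.one_mulVec, Matrix.zero_mulVec,
        ← hode t ht]
    have hF2 : Matrix.fromBlocks (C t) (D t) 0 1 *ᵥ Sum.elim (x t) (u t)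
        = Sum.elim (y t) (u t) := by
      rw [Matrix.fromBlocks_mulVec]
      simp [Sum.elim_comp_inl, Sum.elim_comp_inr, Matrix.one_mulVec, Matrix.zero_mulVec,
        ← hy t ht]
    rw [hKdef, qfR_add, qfR_transform, qfR_transform, hF1, hF2, qfR_add, qfR_add,
      qf_kron, qf_kron] at h0
    have e1 : (!![0,1;1,0] : Matrix (Fin 2) (Fin 2) ℝ) 0 0 = 0 := rfl
    have e2 : (!![0,1;1,0] : Matrix (Fin 2) (Fin 2) ℝ) 0 1 = 1 := rfl
    have e3 : (!![0,1;1,0] : Matrix (Fin 2) (Fin 2) ℝ) 1 0 = 1 := rfl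
    have e4 : (!![0,1;1,0] : Matrix (Fin 2) (Fin 2) ℝ) 1 1 = 0 := rfl
    have f1 : (!![0,0;0,1] : Matrix (Fin 2) (Fin 2) ℝ) 0 0 = 0 := rfl
    have f2 : (!![0,0;0,1] : Matrix (Fin 2) (Fin 2) ℝ) 0 1 = 0 := rfl
    have f3 : (!![0,0;0,1] : Matrix (Fin 2) (Fin 2) ℝ) 1 0 = 0 := rfl
    have f4 : (!![0,0;0,1] : Matrix (Fin 2) (Fin 2) ℝ) 1 1 = 1 := rfl
    rw [e1, e2, e3, e4, f1, f2, f3, f4] at h0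
    simp only [hVddef, htrQdef, hgdef]
    linarith [h0]
  -- continuity facts
  have hxc : ContinuousOn x (Set.Ici 0) := fun t ht => (hx t ht).continuousAt.continuousWithinAt
  have hPc : ContinuousOn P (Set.Ici 0) := fun t ht => (hP t ht).continuousAt.continuousWithinAt
  have hyc : ContinuousOn y (Set.Ici 0) := by
    have h1 : ContinuousOn (fun t => C t *ᵥ x t + D t *ᵥ u t) (Set.Ici 0) :=
      (continuousOn_mulVecF hC hxc).add (continuousOn_mulVecF hD hu)
    exact h1.congr fun t ht => hy t ht
  have htrQc : ContinuousOn trQ (Set.Ici 0) := by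
    rw [htrQdef]
    apply continuousOn_qf
    rintro (i | i) <;> simp only [Sum.elim_inl, Sum.elim_inr]
    exacts [continuousOn_pi.1 hx'c i, continuousOn_pi.1 hxc i]
  have hgc : ContinuousOn g (Set.Ici 0) := by
    rw [hgdef]
    apply continuousOn_qf
    rintro (i | i) <;> simp only [Sum.elim_inl, Sum.elim_inr]
    exacts [continuousOn_pi.1 hyc i, continuousOn_pi.1 hu i]
  have hVc : ContinuousOn V (Set.Ici 0) := continuousOn_qfP hPc hxc
  -- the (extended) majorant and its primitive
  have hmt : Continuous (fun t : ℝ => max t 0) := continuous_id.max continuous_const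
  have hhc : ContinuousOn (fun t => -(trQ t + g t)) (Set.Ici 0) := (htrQc.add hgc).neg
  have hhtld : Continuous (fun t => -(trQ (max t 0) + g (max t 0))) := by
    have := hhc.comp_continuous hmt (fun t => Set.mem_Ici.2 (le_max_right t 0))
    exact this
  set H : ℝ → ℝ := fun T => ∫ s in (0:ℝ)..T, -(trQ (max s 0) + g (max s 0)) with hHdef
  have hHc : Continuous H :=
    intervalIntegral.continuous_primitive (fun a b => hhtld.intervalIntegrable a b) 0
  have hHd : ∀ T : ℝ, HasDerivAt H (-(trQ (max T 0) + g (max T 0))) T := fun T =>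
    intervalIntegral.integral_hasDerivAt_right (hhtld.intervalIntegrable 0 T)
      (hhtld.stronglyMeasurableAtFilter _ _) hhtld.continuousAt
  -- derivative of the storage function
  have hVd : ∀ t ∈ Set.Ici (0:ℝ), HasDerivAt V (Vd t) t := fun t ht =>
    hasDerivAt_qf (hP t ht) (hx t ht)
  -- W is antitone
  have hW : AntitoneOn (fun t => V t - H t) (Set.Ici 0) := by
    apply antitoneOn_of_deriv_nonpos (convex_Ici 0)
    · exact hVc.sub hHc.continuousOn
    · intro t ht
      rw [interior_Ici, Set.mem_Ioi] at ht
      exact ((hVd t ht.le).sub (hHd t)).differentiableAt.differentiableWithinAt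
    · intro t ht
      rw [interior_Ici, Set.mem_Ioi] at ht
      rw [((hVd t ht.le).fun_sub (hHd t)).deriv, max_eq_left ht.le]
      have := stepA t ht.le
      linarith
  -- hence V T ≤ H T for T ≥ 0
  have stepF : ∀ T : ℝ, 0 ≤ T → V T ≤ H T := by
    intro T hT
    have h1 := hW Set.self_mem_Ici (Set.mem_Ici.2 hT) hT
    have hH0 : H 0 = 0 := intervalIntegral.integral_same
    have hV0 : V 0 = 0 := by simp [hVdef, qfR, hx0]
    have h1' : V T - H T ≤ V 0 - H 0 := h1
    rw [hH0, hV0] at h1'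
    linarith
  have stepG : ∀ T : ℝ, 0 ≤ T → H T = -∫ t in (0:ℝ)..T, (trQ t + g t) := by
    intro T hT
    rw [hHdef, ← intervalIntegral.integral_neg]
    apply intervalIntegral.integral_congr
    intro s hs
    rw [Set.uIcc_of_le hT] at hs
    show -(trQ (max s 0) + g (max s 0)) = -(trQ s + g s)
    rw [max_eq_left hs.1]
  -- integrability and sign of the IQC term
  have htrQeq : ∀ t : ℝ, trQ t =
      traceMulCLM Q (Zmat (x' t) (x t) * Ψf * (Zmat (x' t) (x t))ᵀ) := by
    intro t
    rw [htrQdef]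
    simp only [traceMulCLM_apply]
    rw [qf_kron, trace_form, hΨf.apply 0 1]
    ring
  have htrQInt : IntegrableOn trQ (Set.Ioi 0) := by
    have h1 := (traceMulCLM Q).integrable_comp hIQCint
    exact (funext htrQeq) ▸ h1
  have htrQnn : 0 ≤ ∫ t in Set.Ioi (0:ℝ), trQ t := by
    have hcomm := (traceMulCLM Q).integral_comp_comm hIQCint
    have h2 : (∫ t in Set.Ioi (0:ℝ), trQ t)
        = traceMulCLM Q (∫ t in Set.Ioi (0:ℝ),
            Zmat (x' t) (x t) * Ψf * (Zmat (x' t) (x t))ᵀ) := by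
      rw [funext htrQeq]
      exact hcomm
    rw [h2, traceMulCLM_apply]
    exact trace_mul_psd_nonneg hQ hIQC
  -- limits
  obtain ⟨L0, hL0, hVlim⟩ := hlim
  have hTend1 : Filter.Tendsto (fun T => ∫ t in (0:ℝ)..T, (trQ t + g t)) Filter.atTop
      (nhds ((∫ t in Set.Ioi (0:ℝ), trQ t) + ∫ t in Set.Ioi (0:ℝ), g t)) := by
    have hsum : IntegrableOn (fun t => trQ t + g t) (Set.Ioi 0) := htrQInt.add hPerfInt
    have h1 := MeasureTheory.intervalIntegral_tendsto_integral_Ioi 0 hsum Filter.tendsto_id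
    rwa [MeasureTheory.integral_add htrQInt hPerfInt] at h1
  have key : (∫ t in Set.Ioi (0:ℝ), trQ t) + (∫ t in Set.Ioi (0:ℝ), g t) ≤ -L0 := by
    refine le_of_tendsto_of_tendsto hTend1 hVlim.neg ?_
    filter_upwards [Filter.eventually_ge_atTop (0:ℝ)] with T hT
    have h1 := stepF T hT
    have h2 := stepG T hT
    linarith
  linarith
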